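/- Let R̃ ∈ SO(3) and let M ∈ ℝ³ˣ³ be symmetric, positive definite (rank 3) with Tr(M) = 3. Let M̆ = Tr(M)I₃ − M and let λ̲ > 0 denote the minimal eigenvalue (minimal singular value) of M̆. If 1 + Tr(R̃ M M⁻¹) > 0 (equivalently Tr(R̃) > −1), then ‖R̃M‖_I ≤ (2/λ̲) · ‖vex(P_a(R̃M))‖² / (1 + Tr(R̃ M M⁻¹)). -/

import Mathlib

open Matrix

noncomputable section

/-- `SO(3)`: real 3×3 matrices with `RᵀR = RRᵀ = I` and `det R = 1`. -/
def so3 (R : Matrix (Fin 3) (Fin 3) ℝ) : Prop :=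
  Rᵀ * R = 1 ∧ R * Rᵀ = 1 ∧ R.det = 1

/-- The skew-symmetric matrix `[y]ₓ` with `[y]ₓ x = y × x`. -/
def skew (y : Fin 3 → ℝ) : Matrix (Fin 3) (Fin 3) ℝ :=
  !![0, -y 2, y 1; y 2, 0, -y 0; -y 1, y 0, 0]

/-- `vex`, the inverse of `[·]ₓ` on skew-symmetric matrices. -/
def vex (A : Matrix (Fin 3) (Fin 3) ℝ) : Fin 3 → ℝ :=
  ![A 2 1, A 0 2, A 1 0]

/-- Anti-symmetric projection `P_a(A) = (A - Aᵀ)/2`. -/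
def Pa (A : Matrix (Fin 3) (Fin 3) ℝ) : Matrix (Fin 3) (Fin 3) ℝ :=
  (1 / 2 : ℝ) • (A - Aᵀ)

/-- Normalized Euclidean distance `‖A‖_I = (1/4) Tr(I - A)`. -/
def normI (A : Matrix (Fin 3) (Fin 3) ℝ) : ℝ :=
  (1 / 4 : ℝ) * Matrix.trace (1 - A)

/-- Euclidean norm on ℝ³. -/
def euclNorm (v : Fin 3 → ℝ) : ℝ := Real.sqrt (∑ i, v i ^ 2)

/-- Homogeneous transformation matrix `T = [R P; 0 1]`. -/
def homT (R : Matrix (Fin 3) (Fin 3) ℝ) (P : Fin 3 → ℝ) :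
    Matrix (Fin 3 ⊕ Fin 1) (Fin 3 ⊕ Fin 1) ℝ :=
  Matrix.fromBlocks R (Matrix.of fun i (_ : Fin 1) => P i) 0 1

/-- `SE(3)`: 4×4 matrices `[R P; 0 1]` with `R ∈ SO(3)`, `P ∈ ℝ³`. -/
def SE3 (T : Matrix (Fin 3 ⊕ Fin 1) (Fin 3 ⊕ Fin 1) ℝ) : Prop :=
  ∃ R P, so3 R ∧ T = homT R P

/-- Wedge map `[U]∧ = [[Ω]ₓ V; 0 0]` for `U = (Ω, V) ∈ ℝ⁶`. -/
def wedge (Ω V : Fin 3 → ℝ) : Matrix (Fin 3 ⊕ Fin 1) (Fin 3 ⊕ Fin 1) ℝ :=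
  Matrix.fromBlocks (skew Ω) (Matrix.of fun i (_ : Fin 1) => V i) 0 0

/-- Wedge map on `ℝ⁶` represented as `Fin 3 ⊕ Fin 3 → ℝ`. -/
def wedgeS (u : Fin 3 ⊕ Fin 3 → ℝ) : Matrix (Fin 3 ⊕ Fin 1) (Fin 3 ⊕ Fin 1) ℝ :=
  wedge (u ∘ Sum.inl) (u ∘ Sum.inr)

/-- Augmented adjoint `Ad̄_T = [R 0; [P]ₓR R]` of `T = [R P; 0 1]`. -/
def adBar (R : Matrix (Fin 3) (Fin 3) ℝ) (P : Fin 3 → ℝ) :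
    Matrix (Fin 3 ⊕ Fin 3) (Fin 3 ⊕ Fin 3) ℝ :=
  Matrix.fromBlocks R 0 (skew P * R) R

/-- `Ad̄_{T⁻¹} = [Rᵀ 0; -Rᵀ[P]ₓ Rᵀ]` for `T = [R P; 0 1]`. -/
def adBarInv (R : Matrix (Fin 3) (Fin 3) ℝ) (P : Fin 3 → ℝ) :
    Matrix (Fin 3 ⊕ Fin 3) (Fin 3 ⊕ Fin 3) ℝ :=
  Matrix.fromBlocks Rᵀ 0 (-(Rᵀ * skew P)) Rᵀ

/-- Rotation block of a 4×4 homogeneous matrix. -/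
def rotOf (T : Matrix (Fin 3 ⊕ Fin 1) (Fin 3 ⊕ Fin 1) ℝ) : Matrix (Fin 3) (Fin 3) ℝ :=
  Matrix.of fun i j => T (Sum.inl i) (Sum.inl j)

/-- Position block of a 4×4 homogeneous matrix. -/
def posOf (T : Matrix (Fin 3 ⊕ Fin 1) (Fin 3 ⊕ Fin 1) ℝ) : Fin 3 → ℝ :=
  fun i => T (Sum.inl i) (Sum.inr 0)

/-- Augmented adjoint of a 4×4 homogeneous matrix. -/
def adBarT (T : Matrix (Fin 3 ⊕ Fin 1) (Fin 3 ⊕ Fin 1) ℝ) :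
    Matrix (Fin 3 ⊕ Fin 3) (Fin 3 ⊕ Fin 3) ℝ :=
  adBar (rotOf T) (posOf T)

/-- Homogeneous coordinates `(v, 1) ∈ ℝ⁴` of `v ∈ ℝ³`. -/
def hvec (v : Fin 3 → ℝ) : Fin 3 ⊕ Fin 1 → ℝ := Sum.elim v 1

/-- Lemma 1: for `R̃ ∈ SO(3)` and `M` symmetric positive definite with
`Tr M = 3`, with `M̆ = Tr(M)I − M` and `λ̲ > 0` its minimal eigenvalue, if
`1 + Tr(R̃MM⁻¹) > 0` then
`‖R̃M‖_I ≤ (2/λ̲)·‖vex(P_a(R̃M))‖²/(1 + Tr(R̃MM⁻¹))`. -/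

private lemma stmt2_term (lam e yv : ℝ) (hl : 0 < lam) (h : lam ≤ e) :
    lam * (e * yv ^ 2) ≤ e ^ 2 * yv ^ 2 := by
  nlinarith [mul_nonneg (mul_nonneg (le_trans hl.le h) (sub_nonneg.mpr h)) (sq_nonneg yv)]

private lemma stmt2_aux (s lam q ka se w N : ℝ) (hs : 0 < s) (hl : 0 < lam) (hw : 0 ≤ w)
    (hCB : N * s = 2 * q) (hSE : s ^ 2 * se = s ^ 2 * ka + 4 * w) (hb : lam * q ≤ ka) :
    1 / 4 * N * s ≤ 2 / lam * (1 / 4 * se) := by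
  rw [show (2:ℝ) / lam * (1 / 4 * se) = 2 * (1 / 4 * se) / lam by ring, le_div_iff₀ hl]
  have h5 : ka ≤ se := by nlinarith [mul_pos hs hs]
  have h6 : lam * q ≤ se := le_trans hb h5
  have h7 : N * s * lam = 2 * (q * lam) := by linear_combination lam * hCB
  nlinarith [h6, h7]

set_option maxHeartbeats 4000000 in
theorem stmt2 (Rt M : Matrix (Fin 3) (Fin 3) ℝ) (hRt : so3 Rt)
    (hMsym : Mᵀ = M) (hMpd : M.PosDef) (hMtr : Matrix.trace M = 3)
    (lam : ℝ) (hlam_pos : 0 < lam)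
    (hlam_eig : Module.End.HasEigenvalue
      (Matrix.toLin' (Matrix.trace M • (1 : Matrix (Fin 3) (Fin 3) ℝ) - M)) lam)
    (hlam_min : ∀ μ : ℝ, Module.End.HasEigenvalue
      (Matrix.toLin' (Matrix.trace M • (1 : Matrix (Fin 3) (Fin 3) ℝ) - M)) μ → lam ≤ μ)
    (hpos : 0 < 1 + Matrix.trace (Rt * M * M⁻¹)) :
    normI (Rt * M) ≤
      (2 / lam) * (∑ i, (vex (Pa (Rt * M)) i) ^ 2) / (1 + Matrix.trace (Rt * M * M⁻¹)) := by
  have hMinv : M * M⁻¹ = 1 := Matrix.mul_nonsing_inv M (isUnit_iff_ne_zero.mpr (ne_of_gt hMpd.det_pos))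
  rw [mul_assoc, hMinv, mul_one] at hpos ⊢
  obtain ⟨ho1, ho2, hdet1⟩ := hRt
  have hadj : Rt.adjugate = Rtᵀ := by
    have h1 : Rt.adjugate * (Rt * Rtᵀ) = Rt.adjugate := by rw [ho2, mul_one]
    rw [← mul_assoc, Matrix.adjugate_mul, hdet1, one_smul, one_mul] at h1
    exact h1.symm
  rw [hMtr] at hlam_min
  set K : Matrix (Fin 3) (Fin 3) ℝ := (3 : ℝ) • (1 : Matrix (Fin 3) (Fin 3) ℝ) - M with hKdef
  have hR00 : Rt 0 0 * Rt 0 0 + Rt 0 1 * Rt 0 1 + Rt 0 2 * Rt 0 2 = 1 := by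
    have h := congrFun (congrFun ho2 0) 0
    simp [Matrix.mul_apply, Fin.sum_univ_three, Matrix.one_apply] at h
    linear_combination h
  have hR01 : Rt 0 0 * Rt 1 0 + Rt 0 1 * Rt 1 1 + Rt 0 2 * Rt 1 2 = 0 := by
    have h := congrFun (congrFun ho2 0) 1
    simp [Matrix.mul_apply, Fin.sum_univ_three, Matrix.one_apply] at h
    linear_combination h
  have hR02 : Rt 0 0 * Rt 2 0 + Rt 0 1 * Rt 2 1 + Rt 0 2 * Rt 2 2 = 0 := by
    have h := congrFun (congrFun ho2 0) 2
    simp [Matrix.mul_apply, Fin.sum_univ_three, Matrix.one_apply] at h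
    linear_combination h
  have hR11 : Rt 1 0 * Rt 1 0 + Rt 1 1 * Rt 1 1 + Rt 1 2 * Rt 1 2 = 1 := by
    have h := congrFun (congrFun ho2 1) 1
    simp [Matrix.mul_apply, Fin.sum_univ_three, Matrix.one_apply] at h
    linear_combination h
  have hR12 : Rt 1 0 * Rt 2 0 + Rt 1 1 * Rt 2 1 + Rt 1 2 * Rt 2 2 = 0 := by
    have h := congrFun (congrFun ho2 1) 2
    simp [Matrix.mul_apply, Fin.sum_univ_three, Matrix.one_apply] at h
    linear_combination h
  have hR22 : Rt 2 0 * Rt 2 0 + Rt 2 1 * Rt 2 1 + Rt 2 2 * Rt 2 2 = 1 := by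
    have h := congrFun (congrFun ho2 2) 2
    simp [Matrix.mul_apply, Fin.sum_univ_three, Matrix.one_apply] at h
    linear_combination h
  have hCo00 : Rt 0 0 * Rt 0 0 + Rt 1 0 * Rt 1 0 + Rt 2 0 * Rt 2 0 = 1 := by
    have h := congrFun (congrFun ho1 0) 0
    simp [Matrix.mul_apply, Matrix.transpose_apply, Fin.sum_univ_three, Matrix.one_apply] at h
    linear_combination h
  have hCo01 : Rt 0 0 * Rt 0 1 + Rt 1 0 * Rt 1 1 + Rt 2 0 * Rt 2 1 = 0 := by
    have h := congrFun (congrFun ho1 0) 1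
    simp [Matrix.mul_apply, Matrix.transpose_apply, Fin.sum_univ_three, Matrix.one_apply] at h
    linear_combination h
  have hCo02 : Rt 0 0 * Rt 0 2 + Rt 1 0 * Rt 1 2 + Rt 2 0 * Rt 2 2 = 0 := by
    have h := congrFun (congrFun ho1 0) 2
    simp [Matrix.mul_apply, Matrix.transpose_apply, Fin.sum_univ_three, Matrix.one_apply] at h
    linear_combination h
  have hCo11 : Rt 0 1 * Rt 0 1 + Rt 1 1 * Rt 1 1 + Rt 2 1 * Rt 2 1 = 1 := by
    have h := congrFun (congrFun ho1 1) 1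
    simp [Matrix.mul_apply, Matrix.transpose_apply, Fin.sum_univ_three, Matrix.one_apply] at h
    linear_combination h
  have hCo12 : Rt 0 1 * Rt 0 2 + Rt 1 1 * Rt 1 2 + Rt 2 1 * Rt 2 2 = 0 := by
    have h := congrFun (congrFun ho1 1) 2
    simp [Matrix.mul_apply, Matrix.transpose_apply, Fin.sum_univ_three, Matrix.one_apply] at h
    linear_combination h
  have hCo22 : Rt 0 2 * Rt 0 2 + Rt 1 2 * Rt 1 2 + Rt 2 2 * Rt 2 2 = 1 := by
    have h := congrFun (congrFun ho1 2) 2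
    simp [Matrix.mul_apply, Matrix.transpose_apply, Fin.sum_univ_three, Matrix.one_apply] at h
    linear_combination h
  have hD00 : (-1*(Rt 1 2)*(Rt 2 1) + 1*(Rt 1 1)*(Rt 2 2)) = Rt 0 0 := by
    have h := congrFun (congrFun hadj 0) 0
    rw [Matrix.adjugate_fin_three] at h
    simp [Matrix.transpose_apply] at h
    linear_combination h
  have hD01 : (1*(Rt 1 2)*(Rt 2 0) + -1*(Rt 1 0)*(Rt 2 2)) = Rt 0 1 := by
    have h := congrFun (congrFun hadj 1) 0
    rw [Matrix.adjugate_fin_three] at h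
    simp [Matrix.transpose_apply] at h
    linear_combination h
  have hD02 : (-1*(Rt 1 1)*(Rt 2 0) + 1*(Rt 1 0)*(Rt 2 1)) = Rt 0 2 := by
    have h := congrFun (congrFun hadj 2) 0
    rw [Matrix.adjugate_fin_three] at h
    simp [Matrix.transpose_apply] at h
    linear_combination h
  have hD10 : (1*(Rt 0 2)*(Rt 2 1) + -1*(Rt 0 1)*(Rt 2 2)) = Rt 1 0 := by
    have h := congrFun (congrFun hadj 0) 1
    rw [Matrix.adjugate_fin_three] at h
    simp [Matrix.transpose_apply] at h
    linear_combination h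
  have hD11 : (-1*(Rt 0 2)*(Rt 2 0) + 1*(Rt 0 0)*(Rt 2 2)) = Rt 1 1 := by
    have h := congrFun (congrFun hadj 1) 1
    rw [Matrix.adjugate_fin_three] at h
    simp [Matrix.transpose_apply] at h
    linear_combination h
  have hD12 : (1*(Rt 0 1)*(Rt 2 0) + -1*(Rt 0 0)*(Rt 2 1)) = Rt 1 2 := by
    have h := congrFun (congrFun hadj 2) 1
    rw [Matrix.adjugate_fin_three] at h
    simp [Matrix.transpose_apply] at h
    linear_combination h
  have hD20 : (-1*(Rt 0 2)*(Rt 1 1) + 1*(Rt 0 1)*(Rt 1 2)) = Rt 2 0 := by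
    have h := congrFun (congrFun hadj 0) 2
    rw [Matrix.adjugate_fin_three] at h
    simp [Matrix.transpose_apply] at h
    linear_combination h
  have hD21 : (1*(Rt 0 2)*(Rt 1 0) + -1*(Rt 0 0)*(Rt 1 2)) = Rt 2 1 := by
    have h := congrFun (congrFun hadj 1) 2
    rw [Matrix.adjugate_fin_three] at h
    simp [Matrix.transpose_apply] at h
    linear_combination h
  have hD22 : (-1*(Rt 0 1)*(Rt 1 0) + 1*(Rt 0 0)*(Rt 1 1)) = Rt 2 2 := by
    have h := congrFun (congrFun hadj 2) 2
    rw [Matrix.adjugate_fin_three] at h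
    simp [Matrix.transpose_apply] at h
    linear_combination h
  have hm10 : M 1 0 = M 0 1 := by
    have h := congrFun (congrFun hMsym 0) 1
    simpa [Matrix.transpose_apply] using h
  have hm20 : M 2 0 = M 0 2 := by
    have h := congrFun (congrFun hMsym 0) 2
    simpa [Matrix.transpose_apply] using h
  have hm21 : M 2 1 = M 1 2 := by
    have h := congrFun (congrFun hMsym 1) 2
    simpa [Matrix.transpose_apply] using h
  have htr : M 0 0 + M 1 1 + M 2 2 = 3 := by
    have h := hMtr
    simp [Matrix.trace, Matrix.diag, Fin.sum_univ_three] at h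
    linear_combination h
  have hTr : Matrix.trace Rt = Rt 0 0 + Rt 1 1 + Rt 2 2 := by
    simp [Matrix.trace, Matrix.diag, Fin.sum_univ_three]
  have hA00 : ((-1/4) + (1/4)*(Rt 2 2)*(Rt 2 2) + (1/4)*(Rt 2 1)*(Rt 2 1) + (-1/2)*(Rt 1 2)*(Rt 2 1) + (1/4)*(Rt 1 2)*(Rt 1 2) + (1/2)*(Rt 1 1)*(Rt 2 2) + (1/4)*(Rt 1 1)*(Rt 1 1) + (-1/2)*(Rt 0 0) + (-1/4)*(Rt 0 0)*(Rt 0 0)) = 0 := by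
    linear_combination ((1/4)) * hCo11 + ((1/4)) * hCo22 + ((1/2)) * hD00 + ((-1/4)) * hR00
  have hA01 : ((-1/4)*(Rt 2 0)*(Rt 2 1) + (1/4)*(Rt 1 2)*(Rt 2 0) + (-1/4)*(Rt 1 0) + (-1/4)*(Rt 1 0)*(Rt 2 2) + (-1/4)*(Rt 1 0)*(Rt 1 1) + (1/4)*(Rt 0 2)*(Rt 2 1) + (-1/4)*(Rt 0 2)*(Rt 1 2) + (-1/4)*(Rt 0 1) + (-1/4)*(Rt 0 1)*(Rt 2 2) + (-1/4)*(Rt 0 1)*(Rt 1 1) + (-1/4)*(Rt 0 0)*(Rt 1 0) + (-1/4)*(Rt 0 0)*(Rt 0 1)) = 0 := by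
    linear_combination ((-1/4)) * hCo01 + ((1/4)) * hD01 + ((1/4)) * hD10 + ((-1/4)) * hR01
  have hA02 : ((-1/4)*(Rt 2 0) + (-1/4)*(Rt 2 0)*(Rt 2 2) + (-1/4)*(Rt 1 1)*(Rt 2 0) + (1/4)*(Rt 1 0)*(Rt 2 1) + (-1/4)*(Rt 1 0)*(Rt 1 2) + (-1/4)*(Rt 0 2) + (-1/4)*(Rt 0 2)*(Rt 2 2) + (-1/4)*(Rt 0 2)*(Rt 1 1) + (-1/4)*(Rt 0 1)*(Rt 2 1) + (1/4)*(Rt 0 1)*(Rt 1 2) + (-1/4)*(Rt 0 0)*(Rt 2 0) + (-1/4)*(Rt 0 0)*(Rt 0 2)) = 0 := by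
    linear_combination ((-1/4)) * hCo02 + ((1/4)) * hD02 + ((1/4)) * hD20 + ((-1/4)) * hR02
  have hA11 : ((-1/4) + (1/4)*(Rt 2 2)*(Rt 2 2) + (1/4)*(Rt 2 0)*(Rt 2 0) + (-1/2)*(Rt 1 1) + (-1/4)*(Rt 1 1)*(Rt 1 1) + (-1/2)*(Rt 0 2)*(Rt 2 0) + (1/4)*(Rt 0 2)*(Rt 0 2) + (1/2)*(Rt 0 0)*(Rt 2 2) + (1/4)*(Rt 0 0)*(Rt 0 0)) = 0 := by
    linear_combination ((1/4)) * hCo00 + ((1/4)) * hCo22 + ((1/2)) * hD11 + ((-1/4)) * hR11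
  have hA12 : ((-1/4)*(Rt 2 1) + (-1/4)*(Rt 2 1)*(Rt 2 2) + (-1/4)*(Rt 1 2) + (-1/4)*(Rt 1 2)*(Rt 2 2) + (-1/4)*(Rt 1 1)*(Rt 2 1) + (-1/4)*(Rt 1 1)*(Rt 1 2) + (-1/4)*(Rt 1 0)*(Rt 2 0) + (1/4)*(Rt 0 2)*(Rt 1 0) + (1/4)*(Rt 0 1)*(Rt 2 0) + (-1/4)*(Rt 0 1)*(Rt 0 2) + (-1/4)*(Rt 0 0)*(Rt 2 1) + (-1/4)*(Rt 0 0)*(Rt 1 2)) = 0 := by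
    linear_combination ((-1/4)) * hCo12 + ((1/4)) * hD12 + ((1/4)) * hD21 + ((-1/4)) * hR12
  have hA22 : ((-1/4) + (-1/2)*(Rt 2 2) + (-1/4)*(Rt 2 2)*(Rt 2 2) + (1/4)*(Rt 1 1)*(Rt 1 1) + (1/4)*(Rt 1 0)*(Rt 1 0) + (-1/2)*(Rt 0 1)*(Rt 1 0) + (1/4)*(Rt 0 1)*(Rt 0 1) + (1/2)*(Rt 0 0)*(Rt 1 1) + (1/4)*(Rt 0 0)*(Rt 0 0)) = 0 := by
    linear_combination ((-1/4)) * hCo22 + ((1/2)) * hD22 + ((1/4)) * hR00 + ((1/4)) * hR11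
  have hCB : (3 - (1*(Rt 2 2)*(M 2 2) + 1*(Rt 2 1)*(M 1 2) + 1*(Rt 2 0)*(M 0 2) + 1*(Rt 1 2)*(M 1 2) + 1*(Rt 1 1)*(M 1 1) + 1*(Rt 1 0)*(M 0 1) + 1*(Rt 0 2)*(M 0 2) + 1*(Rt 0 1)*(M 0 1) + 1*(Rt 0 0)*(M 0 0))) * (1 + (Rt 0 0 + Rt 1 1 + Rt 2 2)) = 2 * ((3/4)*(Rt 2 1)*(Rt 2 1) + (-1/4)*(Rt 2 1)*(Rt 2 1)*(M 0 0) + (1/2)*(Rt 2 0)*(Rt 2 1)*(M 0 1) + (3/4)*(Rt 2 0)*(Rt 2 0) + (-1/4)*(Rt 2 0)*(Rt 2 0)*(M 1 1) + (-3/2)*(Rt 1 2)*(Rt 2 1) + (1/2)*(Rt 1 2)*(Rt 2 1)*(M 0 0) + (-1/2)*(Rt 1 2)*(Rt 2 0)*(M 0 1) + (3/4)*(Rt 1 2)*(Rt 1 2) + (-1/4)*(Rt 1 2)*(Rt 1 2)*(M 0 0) + (-1/2)*(Rt 1 0)*(Rt 2 1)*(M 0 2) + (1/2)*(Rt 1 0)*(Rt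 2 0)*(M 1 2) + (1/2)*(Rt 1 0)*(Rt 1 2)*(M 0 2) + (3/4)*(Rt 1 0)*(Rt 1 0) + (-1/4)*(Rt 1 0)*(Rt 1 0)*(M 2 2) + (-1/2)*(Rt 0 2)*(Rt 2 1)*(M 0 1) + (-3/2)*(Rt 0 2)*(Rt 2 0) + (1/2)*(Rt 0 2)*(Rt 2 0)*(M 1 1) + (1/2)*(Rt 0 2)*(Rt 1 2)*(M 0 1) + (-1/2)*(Rt 0 2)*(Rt 1 0)*(M 1 2) + (3/4)*(Rt 0 2)*(Rt 0 2) + (-1/4)*(Rt 0 2)*(Rt 0 2)*(M 1 1) + (1/2)*(Rt 0 1)*(Rt 2 1)*(M 0 2) + (-1/2)*(Rt 0 1)*(Rt 2 0)*(M 1 2) + (-1/2)*(Rt 0 1)*(Rt 1 2)*(M 0 2) + (-3/2)*(Rt 0 1)*(Rt 1 0) + (1/2)*(Rt 0 1)*(Rt 1 0)*(M 2 2) + (1/2)*(Rt 0 1)*(Rt 0 2)*(M 1 2) + (3/4)*(Rt 0 1)*(Rt 0 1) + (-1/4)*(Rt 0 1)*(Rt 0 1)*(M 2 2)) := by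
    linear_combination ((-6 + 2*(M 0 0))) * hA00 + ((4*(M 0 1))) * hA01 + ((4*(M 0 2))) * hA02 + ((-6 + 2*(M 1 1))) * hA11 + ((4*(M 1 2))) * hA12 + ((-6 + 2*(M 2 2))) * hA22 + (((1/2) + (-1/2)*(Rt 2 2)*(Rt 2 2) + -1*(Rt 1 1)*(Rt 2 2) + (-1/2)*(Rt 1 1)*(Rt 1 1) + -1*(Rt 0 0)*(Rt 2 2) + -1*(Rt 0 0)*(Rt 1 1) + (-1/2)*(Rt 0 0)*(Rt 0 0))) * htr
  have hC0 : (1 + (Rt 0 0 + Rt 1 1 + Rt 2 2)) * (1*(Rt 2 2)*(M 1 2) + 1*(Rt 2 1)*(M 1 1) + 1*(Rt 2 0)*(M 0 1) + -1*(Rt 1 2)*(M 2 2) + -1*(Rt 1 1)*(M 1 2) + -1*(Rt 1 0)*(M 0 2)) = (1 + (Rt 0 0 + Rt 1 1 + Rt 2 2)) * ((3/2)*(Rt 2 1) + (-1/2)*(Rt 2 1)*(M 0 0) + (1/2)*(Rt 2 0)*(M 0 1) + (-3/2)*(Rt 1 2) + (1/2)*(Rt 1 2)*(M 0 0) + (-1/2)*(Rt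 1 0)*(M 0 2) + (-1/2)*(Rt 0 2)*(M 0 1) + (1/2)*(Rt 0 1)*(M 0 2)) + 2 * ((1/4)*(Rt 2 0)*(Rt 2 1)*(M 0 2) + (-1/4)*(Rt 2 0)*(Rt 2 0)*(M 1 2) + (-1/4)*(Rt 1 2)*(Rt 2 0)*(M 0 2) + (1/4)*(Rt 1 0)*(Rt 2 1)*(M 0 1) + (1/4)*(Rt 1 0)*(Rt 2 0)*(M 2 2) + (-1/4)*(Rt 1 0)*(Rt 2 0)*(M 1 1) + (-1/4)*(Rt 1 0)*(Rt 1 2)*(M 0 1) + (1/4)*(Rt 1 0)*(Rt 1 0)*(M 1 2) + (-1/4)*(Rt 0 2)*(Rt 2 1)*(M 0 2) + (1/2)*(Rt 0 2)*(Rt 2 0)*(M 1 2) + (1/4)*(Rt 0 2)*(Rt 1 2)*(M 0 2) + (-1/4)*(Rt 0 2)*(Rt 1 0)*(M 2 2) + (1/4)*(Rt 0 2)*(Rt 1 0)*(M 1 1) + (-1/4)*(Rt 0 2)*(Rt 0 2)*(M 1 2) + (-1/4)*(Rt 0 1)*(Rt 2 1)*(M 0 1) + (-1/4)*(Rt 0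 1)*(Rt 2 0)*(M 2 2) + (1/4)*(Rt 0 1)*(Rt 2 0)*(M 1 1) + (1/4)*(Rt 0 1)*(Rt 1 2)*(M 0 1) + (-1/2)*(Rt 0 1)*(Rt 1 0)*(M 1 2) + (1/4)*(Rt 0 1)*(Rt 0 2)*(M 2 2) + (-1/4)*(Rt 0 1)*(Rt 0 2)*(M 1 1) + (1/4)*(Rt 0 1)*(Rt 0 1)*(M 1 2)) := by
    linear_combination ((2*(M 0 2))) * hA01 + ((-2*(M 0 1))) * hA02 + ((2*(M 1 2))) * hA11 + ((2*(M 2 2) + -2*(M 1 1))) * hA12 + ((-2*(M 1 2))) * hA22 + (((1/2)*(Rt 2 1) + (1/2)*(Rt 2 1)*(Rt 2 2) + (-1/2)*(Rt 1 2) + (-1/2)*(Rt 1 2)*(Rt 2 2) + (1/2)*(Rt 1 1)*(Rt 2 1) + (-1/2)*(Rt 1 1)*(Rt 1 2) + (1/2)*(Rt 0 0)*(Rt 2 1) + (-1/2)*(Rt 0 0)*(Rt 1 2))) * htr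
  have hC1 : (1 + (Rt 0 0 + Rt 1 1 + Rt 2 2)) * (-1*(Rt 2 2)*(M 0 2) + -1*(Rt 2 1)*(M 0 1) + -1*(Rt 2 0)*(M 0 0) + 1*(Rt 0 2)*(M 2 2) + 1*(Rt 0 1)*(M 1 2) + 1*(Rt 0 0)*(M 0 2)) = (1 + (Rt 0 0 + Rt 1 1 + Rt 2 2)) * ((-1/2)*(Rt 2 1)*(M 0 1) + (-3/2)*(Rt 2 0) + (1/2)*(Rt 2 0)*(M 1 1) + (1/2)*(Rt 1 2)*(M 0 1) + (-1/2)*(Rt 1 0)*(M 1 2) + (3/2)*(Rt 0 2) + (-1/2)*(Rt 0 2)*(M 1 1) + (1/2)*(Rt 0 1)*(M 1 2)) + 2 * ((1/4)*(Rt 2 1)*(Rt 2 1)*(M 0 2) + (-1/4)*(Rt 2 0)*(Rt 2 1)*(M 1 2) + (-1/2)*(Rt 1 2)*(Rt 2 1)*(M 0 2) + (1/4)*(Rt 1 2)*(Rt 2 0)*(M 1 2) + (1/4)*(Rt 1 2)*(Rt 1 2)*(M 0 2) + (1/4)*(Rt 1 0)*(Rt 2 1)*(M 2 2) + (-1/4)*(Rt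 1 0)*(Rt 2 1)*(M 0 0) + (1/4)*(Rt 1 0)*(Rt 2 0)*(M 0 1) + (-1/4)*(Rt 1 0)*(Rt 1 2)*(M 2 2) + (1/4)*(Rt 1 0)*(Rt 1 2)*(M 0 0) + (-1/4)*(Rt 1 0)*(Rt 1 0)*(M 0 2) + (1/4)*(Rt 0 2)*(Rt 2 1)*(M 1 2) + (-1/4)*(Rt 0 2)*(Rt 1 2)*(M 1 2) + (-1/4)*(Rt 0 2)*(Rt 1 0)*(M 0 1) + (-1/4)*(Rt 0 1)*(Rt 2 1)*(M 2 2) + (1/4)*(Rt 0 1)*(Rt 2 1)*(M 0 0) + (-1/4)*(Rt 0 1)*(Rt 2 0)*(M 0 1) + (1/4)*(Rt 0 1)*(Rt 1 2)*(M 2 2) + (-1/4)*(Rt 0 1)*(Rt 1 2)*(M 0 0) + (1/2)*(Rt 0 1)*(Rt 1 0)*(M 0 2) + (1/4)*(Rt 0 1)*(Rt 0 2)*(M 0 1) + (-1/4)*(Rt 0 1)*(Rt 0 1)*(M 0 2)) := by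
    linear_combination ((-2*(M 0 2))) * hA00 + ((-2*(M 1 2))) * hA01 + ((-2*(M 2 2) + 2*(M 0 0))) * hA02 + ((2*(M 0 1))) * hA12 + ((2*(M 0 2))) * hA22 + (((-1/2)*(Rt 2 0) + (-1/2)*(Rt 2 0)*(Rt 2 2) + (-1/2)*(Rt 1 1)*(Rt 2 0) + (1/2)*(Rt 0 2) + (1/2)*(Rt 0 2)*(Rt 2 2) + (1/2)*(Rt 0 2)*(Rt 1 1) + (-1/2)*(Rt 0 0)*(Rt 2 0) + (1/2)*(Rt 0 0)*(Rt 0 2))) * htr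
  have hC2 : (1 + (Rt 0 0 + Rt 1 1 + Rt 2 2)) * (1*(Rt 1 2)*(M 0 2) + 1*(Rt 1 1)*(M 0 1) + 1*(Rt 1 0)*(M 0 0) + -1*(Rt 0 2)*(M 1 2) + -1*(Rt 0 1)*(M 1 1) + -1*(Rt 0 0)*(M 0 1)) = (1 + (Rt 0 0 + Rt 1 1 + Rt 2 2)) * ((-1/2)*(Rt 2 1)*(M 0 2) + (1/2)*(Rt 2 0)*(M 1 2) + (1/2)*(Rt 1 2)*(M 0 2) + (3/2)*(Rt 1 0) + (-1/2)*(Rt 1 0)*(M 2 2) + (-1/2)*(Rt 0 2)*(M 1 2) + (-3/2)*(Rt 0 1) + (1/2)*(Rt 0 1)*(M 2 2)) + 2 * ((-1/4)*(Rt 2 1)*(Rt 2 1)*(M 0 1) + (1/4)*(Rt 2 0)*(Rt 2 1)*(M 1 1) + (-1/4)*(Rt 2 0)*(Rt 2 1)*(M 0 0) + (1/4)*(Rt 2 0)*(Rt 2 0)*(M 0 1) + (1/2)*(Rt 1 2)*(Rt 2 1)*(M 0 1) + (-1/4)*(Rt 1 2)*(Rt 2 0)*(M 1 1) + (1/4)*(Rt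 1 2)*(Rt 2 0)*(M 0 0) + (-1/4)*(Rt 1 2)*(Rt 1 2)*(M 0 1) + (-1/4)*(Rt 1 0)*(Rt 2 1)*(M 1 2) + (-1/4)*(Rt 1 0)*(Rt 2 0)*(M 0 2) + (1/4)*(Rt 1 0)*(Rt 1 2)*(M 1 2) + (-1/4)*(Rt 0 2)*(Rt 2 1)*(M 1 1) + (1/4)*(Rt 0 2)*(Rt 2 1)*(M 0 0) + (-1/2)*(Rt 0 2)*(Rt 2 0)*(M 0 1) + (1/4)*(Rt 0 2)*(Rt 1 2)*(M 1 1) + (-1/4)*(Rt 0 2)*(Rt 1 2)*(M 0 0) + (1/4)*(Rt 0 2)*(Rt 1 0)*(M 0 2) + (1/4)*(Rt 0 2)*(Rt 0 2)*(M 0 1) + (1/4)*(Rt 0 1)*(Rt 2 1)*(M 1 2) + (1/4)*(Rt 0 1)*(Rt 2 0)*(M 0 2) + (-1/4)*(Rt 0 1)*(Rt 1 2)*(M 1 2) + (-1/4)*(Rt 0 1)*(Rt 0 2)*(M 0 2)) := by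
    linear_combination ((2*(M 0 1))) * hA00 + ((2*(M 1 1) + -2*(M 0 0))) * hA01 + ((2*(M 1 2))) * hA02 + ((-2*(M 0 1))) * hA11 + ((-2*(M 0 2))) * hA12 + (((1/2)*(Rt 1 0) + (1/2)*(Rt 1 0)*(Rt 2 2) + (1/2)*(Rt 1 0)*(Rt 1 1) + (-1/2)*(Rt 0 1) + (-1/2)*(Rt 0 1)*(Rt 2 2) + (-1/2)*(Rt 0 1)*(Rt 1 1) + (1/2)*(Rt 0 0)*(Rt 1 0) + (-1/2)*(Rt 0 0)*(Rt 0 1))) * htr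
  have hcross : ((3/2)*(Rt 2 1) + (-1/2)*(Rt 2 1)*(M 0 0) + (1/2)*(Rt 2 0)*(M 0 1) + (-3/2)*(Rt 1 2) + (1/2)*(Rt 1 2)*(M 0 0) + (-1/2)*(Rt 1 0)*(M 0 2) + (-1/2)*(Rt 0 2)*(M 0 1) + (1/2)*(Rt 0 1)*(M 0 2)) * ((1/4)*(Rt 2 0)*(Rt 2 1)*(M 0 2) + (-1/4)*(Rt 2 0)*(Rt 2 0)*(M 1 2) + (-1/4)*(Rt 1 2)*(Rt 2 0)*(M 0 2) + (1/4)*(Rt 1 0)*(Rt 2 1)*(M 0 1) + (1/4)*(Rt 1 0)*(Rt 2 0)*(M 2 2) + (-1/4)*(Rt 1 0)*(Rt 2 0)*(M 1 1) + (-1/4)*(Rt 1 0)*(Rt 1 2)*(M 0 1) + (1/4)*(Rt 1 0)*(Rt 1 0)*(M 1 2) + (-1/4)*(Rt 0 2)*(Rt 2 1)*(M 0 2) + (1/2)*(Rt 0 2)*(Rt 2 0)*(M 1 2) + (1/4)*(Rt 0 2)*(Rt 1 2)*(M 0 2) + (-1/4)*(Rt 0 2)*(Rt 1 0)*(M 2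 2) + (1/4)*(Rt 0 2)*(Rt 1 0)*(M 1 1) + (-1/4)*(Rt 0 2)*(Rt 0 2)*(M 1 2) + (-1/4)*(Rt 0 1)*(Rt 2 1)*(M 0 1) + (-1/4)*(Rt 0 1)*(Rt 2 0)*(M 2 2) + (1/4)*(Rt 0 1)*(Rt 2 0)*(M 1 1) + (1/4)*(Rt 0 1)*(Rt 1 2)*(M 0 1) + (-1/2)*(Rt 0 1)*(Rt 1 0)*(M 1 2) + (1/4)*(Rt 0 1)*(Rt 0 2)*(M 2 2) + (-1/4)*(Rt 0 1)*(Rt 0 2)*(M 1 1) + (1/4)*(Rt 0 1)*(Rt 0 1)*(M 1 2)) + ((-1/2)*(Rt 2 1)*(M 0 1) + (-3/2)*(Rt 2 0) + (1/2)*(Rt 2 0)*(M 1 1) + (1/2)*(Rt 1 2)*(M 0 1) + (-1/2)*(Rt 1 0)*(M 1 2) + (3/2)*(Rt 0 2) + (-1/2)*(Rt 0 2)*(M 1 1) + (1/2)*(Rt 0 1)*(M 1 2)) * ((1/4)*(Rt 2 1)*(Rt 2 1)*(M 0 2) + (-1/4)*(Rt 2 0)*(Rt 2 1)*(M 1 2)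 + (-1/2)*(Rt 1 2)*(Rt 2 1)*(M 0 2) + (1/4)*(Rt 1 2)*(Rt 2 0)*(M 1 2) + (1/4)*(Rt 1 2)*(Rt 1 2)*(M 0 2) + (1/4)*(Rt 1 0)*(Rt 2 1)*(M 2 2) + (-1/4)*(Rt 1 0)*(Rt 2 1)*(M 0 0) + (1/4)*(Rt 1 0)*(Rt 2 0)*(M 0 1) + (-1/4)*(Rt 1 0)*(Rt 1 2)*(M 2 2) + (1/4)*(Rt 1 0)*(Rt 1 2)*(M 0 0) + (-1/4)*(Rt 1 0)*(Rt 1 0)*(M 0 2) + (1/4)*(Rt 0 2)*(Rt 2 1)*(M 1 2) + (-1/4)*(Rt 0 2)*(Rt 1 2)*(M 1 2) + (-1/4)*(Rt 0 2)*(Rt 1 0)*(M 0 1) + (-1/4)*(Rt 0 1)*(Rt 2 1)*(M 2 2) + (1/4)*(Rt 0 1)*(Rt 2 1)*(M 0 0) + (-1/4)*(Rt 0 1)*(Rt 2 0)*(M 0 1) + (1/4)*(Rt 0 1)*(Rt 1 2)*(M 2 2) + (-1/4)*(Rt 0 1)*(Rt 1 2)*(M 0 0) + (1/2)*(Rt 0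 1)*(Rt 1 0)*(M 0 2) + (1/4)*(Rt 0 1)*(Rt 0 2)*(M 0 1) + (-1/4)*(Rt 0 1)*(Rt 0 1)*(M 0 2)) + ((-1/2)*(Rt 2 1)*(M 0 2) + (1/2)*(Rt 2 0)*(M 1 2) + (1/2)*(Rt 1 2)*(M 0 2) + (3/2)*(Rt 1 0) + (-1/2)*(Rt 1 0)*(M 2 2) + (-1/2)*(Rt 0 2)*(M 1 2) + (-3/2)*(Rt 0 1) + (1/2)*(Rt 0 1)*(M 2 2)) * ((-1/4)*(Rt 2 1)*(Rt 2 1)*(M 0 1) + (1/4)*(Rt 2 0)*(Rt 2 1)*(M 1 1) + (-1/4)*(Rt 2 0)*(Rt 2 1)*(M 0 0) + (1/4)*(Rt 2 0)*(Rt 2 0)*(M 0 1) + (1/2)*(Rt 1 2)*(Rt 2 1)*(M 0 1) + (-1/4)*(Rt 1 2)*(Rt 2 0)*(M 1 1) + (1/4)*(Rt 1 2)*(Rt 2 0)*(M 0 0) + (-1/4)*(Rt 1 2)*(Rt 1 2)*(M 0 1) + (-1/4)*(Rt 1 0)*(Rt 2 1)*(M 1 2) + (-1/4)*(Rt 1 0)*(Rt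 2 0)*(M 0 2) + (1/4)*(Rt 1 0)*(Rt 1 2)*(M 1 2) + (-1/4)*(Rt 0 2)*(Rt 2 1)*(M 1 1) + (1/4)*(Rt 0 2)*(Rt 2 1)*(M 0 0) + (-1/2)*(Rt 0 2)*(Rt 2 0)*(M 0 1) + (1/4)*(Rt 0 2)*(Rt 1 2)*(M 1 1) + (-1/4)*(Rt 0 2)*(Rt 1 2)*(M 0 0) + (1/4)*(Rt 0 2)*(Rt 1 0)*(M 0 2) + (1/4)*(Rt 0 2)*(Rt 0 2)*(M 0 1) + (1/4)*(Rt 0 1)*(Rt 2 1)*(M 1 2) + (1/4)*(Rt 0 1)*(Rt 2 0)*(M 0 2) + (-1/4)*(Rt 0 1)*(Rt 1 2)*(M 1 2) + (-1/4)*(Rt 0 1)*(Rt 0 2)*(M 0 2)) = 0 := by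
    ring
  have hNI : normI (Rt * M) = 1/4 * (3 - (1*(Rt 2 2)*(M 2 2) + 1*(Rt 2 1)*(M 1 2) + 1*(Rt 2 0)*(M 0 2) + 1*(Rt 1 2)*(M 1 2) + 1*(Rt 1 1)*(M 1 1) + 1*(Rt 1 0)*(M 0 1) + 1*(Rt 0 2)*(M 0 2) + 1*(Rt 0 1)*(M 0 1) + 1*(Rt 0 0)*(M 0 0))) := by
    simp only [normI, Matrix.trace, Matrix.diag, Fin.sum_univ_three, Matrix.sub_apply,
      Matrix.one_apply, Matrix.mul_apply]
    simp only [hm10, hm20, hm21]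
    norm_num [Fin.ext_iff]
    ring
  have hEsum : (∑ i, (vex (Pa (Rt * M)) i) ^ 2) = 1/4 * ((1*(Rt 2 2)*(M 1 2) + 1*(Rt 2 1)*(M 1 1) + 1*(Rt 2 0)*(M 0 1) + -1*(Rt 1 2)*(M 2 2) + -1*(Rt 1 1)*(M 1 2) + -1*(Rt 1 0)*(M 0 2))^2 + (-1*(Rt 2 2)*(M 0 2) + -1*(Rt 2 1)*(M 0 1) + -1*(Rt 2 0)*(M 0 0) + 1*(Rt 0 2)*(M 2 2) + 1*(Rt 0 1)*(M 1 2) + 1*(Rt 0 0)*(M 0 2))^2 + (1*(Rt 1 2)*(M 0 2) + 1*(Rt 1 1)*(M 0 1) + 1*(Rt 1 0)*(M 0 0) + -1*(Rt 0 2)*(M 1 2) + -1*(Rt 0 1)*(M 1 1) + -1*(Rt 0 0)*(M 0 1))^2) := by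
    simp only [vex, Pa, Fin.sum_univ_three, Matrix.smul_apply, Matrix.sub_apply,
      Matrix.transpose_apply, Matrix.mul_apply, smul_eq_mul, Matrix.cons_val_zero,
      Matrix.cons_val_one, Matrix.head_cons, Matrix.cons_val_two, Matrix.tail_cons]
    simp only [hm10, hm20, hm21]
    ring
  set av : Fin 3 → ℝ := ![((1/2)*(Rt 2 1) + (-1/2)*(Rt 1 2)), ((-1/2)*(Rt 2 0) + (1/2)*(Rt 0 2)), ((1/2)*(Rt 1 0) + (-1/2)*(Rt 0 1))] with havdef
  have hqb : av ⬝ᵥ K *ᵥ av = ((3/4)*(Rt 2 1)*(Rt 2 1) + (-1/4)*(Rt 2 1)*(Rt 2 1)*(M 0 0) + (1/2)*(Rt 2 0)*(Rt 2 1)*(M 0 1) + (3/4)*(Rt 2 0)*(Rt 2 0) + (-1/4)*(Rt 2 0)*(Rt 2 0)*(M 1 1) + (-3/2)*(Rt 1 2)*(Rt 2 1) + (1/2)*(Rt 1 2)*(Rt 2 1)*(M 0 0) + (-1/2)*(Rt 1 2)*(Rt 2 0)*(M 0 1) + (3/4)*(Rt 1 2)*(Rt 1 2) + (-1/4)*(Rt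 1 2)*(Rt 1 2)*(M 0 0) + (-1/2)*(Rt 1 0)*(Rt 2 1)*(M 0 2) + (1/2)*(Rt 1 0)*(Rt 2 0)*(M 1 2) + (1/2)*(Rt 1 0)*(Rt 1 2)*(M 0 2) + (3/4)*(Rt 1 0)*(Rt 1 0) + (-1/4)*(Rt 1 0)*(Rt 1 0)*(M 2 2) + (-1/2)*(Rt 0 2)*(Rt 2 1)*(M 0 1) + (-3/2)*(Rt 0 2)*(Rt 2 0) + (1/2)*(Rt 0 2)*(Rt 2 0)*(M 1 1) + (1/2)*(Rt 0 2)*(Rt 1 2)*(M 0 1) + (-1/2)*(Rt 0 2)*(Rt 1 0)*(M 1 2) + (3/4)*(Rt 0 2)*(Rt 0 2) + (-1/4)*(Rt 0 2)*(Rt 0 2)*(M 1 1) + (1/2)*(Rt 0 1)*(Rt 2 1)*(M 0 2) + (-1/2)*(Rt 0 1)*(Rt 2 0)*(M 1 2) + (-1/2)*(Rt 0 1)*(Rt 1 2)*(M 0 2) + (-3/2)*(Rt 0 1)*(Rt 1 0) + (1/2)*(Rt 0 1)*(Rt 1 0)*(M 2 2) + (1/2)*(Rt 0 1)*(Rt 0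 2)*(M 1 2) + (3/4)*(Rt 0 1)*(Rt 0 1) + (-1/4)*(Rt 0 1)*(Rt 0 1)*(M 2 2)) := by
    simp only [havdef, hKdef, dotProduct, Matrix.mulVec, Fin.sum_univ_three,
      Matrix.sub_apply, Matrix.smul_apply, Matrix.one_apply, smul_eq_mul,
      Matrix.cons_val_zero, Matrix.cons_val_one, Matrix.head_cons, Matrix.cons_val_two,
      Matrix.tail_cons]
    simp only [hm10, hm20, hm21]
    norm_num [Fin.ext_iff]
    ring
  have hKab : (K *ᵥ av) ⬝ᵥ (K *ᵥ av) = (((3/2)*(Rt 2 1) + (-1/2)*(Rt 2 1)*(M 0 0) + (1/2)*(Rt 2 0)*(M 0 1) + (-3/2)*(Rt 1 2) + (1/2)*(Rt 1 2)*(M 0 0) + (-1/2)*(Rt 1 0)*(M 0 2) + (-1/2)*(Rt 0 2)*(M 0 1) + (1/2)*(Rt 0 1)*(M 0 2))^2 + ((-1/2)*(Rt 2 1)*(M 0 1) + (-3/2)*(Rt 2 0) + (1/2)*(Rt 2 0)*(M 1 1) + (1/2)*(Rt 1 2)*(M 0 1) + (-1/2)*(Rt 1 0)*(M 1 2) + (3/2)*(Rt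 0 2) + (-1/2)*(Rt 0 2)*(M 1 1) + (1/2)*(Rt 0 1)*(M 1 2))^2 + ((-1/2)*(Rt 2 1)*(M 0 2) + (1/2)*(Rt 2 0)*(M 1 2) + (1/2)*(Rt 1 2)*(M 0 2) + (3/2)*(Rt 1 0) + (-1/2)*(Rt 1 0)*(M 2 2) + (-1/2)*(Rt 0 2)*(M 1 2) + (-3/2)*(Rt 0 1) + (1/2)*(Rt 0 1)*(M 2 2))^2) := by
    simp only [havdef, hKdef, dotProduct, Matrix.mulVec, Fin.sum_univ_three,
      Matrix.sub_apply, Matrix.smul_apply, Matrix.one_apply, smul_eq_mul,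
      Matrix.cons_val_zero, Matrix.cons_val_one, Matrix.head_cons, Matrix.cons_val_two,
      Matrix.tail_cons]
    simp only [hm10, hm20, hm21]
    norm_num [Fin.ext_iff]
    ring
  -- spectral part
  have hKherm : K.IsHermitian := by
    show Kᴴ = K
    ext i j
    fin_cases i <;> fin_cases j <;>
      simp [hKdef, Matrix.conjTranspose_apply, Matrix.sub_apply, Matrix.smul_apply,
        Matrix.one_apply, hm10, hm20, hm21]
  have hmin : ∀ i : Fin 3, lam ≤ hKherm.eigenvalues i := by
    intro i
    apply hlam_min
    have hv := hKherm.mulVec_eigenvectorBasis i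
    have hnz : ⇑(hKherm.eigenvectorBasis i) ≠ 0 := by
      intro h0
      have h1 := hKherm.eigenvectorBasis.orthonormal.1 i
      rw [show hKherm.eigenvectorBasis i = 0 from by ext j; exact congrFun h0 j] at h1
      simp at h1
    exact Module.End.hasEigenvalue_of_hasEigenvector
      ⟨Module.End.mem_eigenspace_iff.mpr (by rw [Matrix.toLin'_apply]; exact hv), hnz⟩
  set U : Matrix (Fin 3) (Fin 3) ℝ := (hKherm.eigenvectorUnitary : Matrix (Fin 3) (Fin 3) ℝ) with hUdef
  have hUU : star U * U = 1 := Matrix.mem_unitaryGroup_iff'.mp hKherm.eigenvectorUnitary.2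
  have hspec : K = U * Matrix.diagonal hKherm.eigenvalues * star U := by
    have h := hKherm.spectral_theorem
    simpa [RCLike.ofReal_real_eq_id] using h
  set ev : Fin 3 → ℝ := hKherm.eigenvalues with hevdef
  set y : Fin 3 → ℝ := star U *ᵥ av with hydef
  have h1 : av ⬝ᵥ K *ᵥ av = ∑ i, ev i * (y i) ^ 2 := by
    rw [hspec]
    simp only [hydef, dotProduct, Matrix.mulVec, Matrix.mul_apply, Matrix.diagonal,
      Fin.sum_univ_three, Matrix.star_apply, star_trivial, Matrix.of_apply]
    norm_num [Fin.ext_iff]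
    ring
  have hKK : K * K = U * Matrix.diagonal (fun i => ev i * ev i) * star U := by
    rw [hspec]
    simp only [Matrix.mul_assoc]
    rw [show star U * (U * (Matrix.diagonal ev * star U)) = Matrix.diagonal ev * star U by
      rw [← Matrix.mul_assoc, hUU, one_mul]]
    rw [show Matrix.diagonal ev * (Matrix.diagonal ev * star U)
        = Matrix.diagonal (fun i => ev i * ev i) * star U by
      rw [← Matrix.mul_assoc, Matrix.diagonal_mul_diagonal]]
  have hKsym : ∀ i j, K i j = K j i := by
    intro i j
    have h := congrFun (congrFun hKherm j) i
    simpa [Matrix.conjTranspose_apply] using h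
  have h2' : (K *ᵥ av) ⬝ᵥ (K *ᵥ av) = av ⬝ᵥ (K * K) *ᵥ av := by
    simp only [dotProduct, Matrix.mulVec, Matrix.mul_apply, Fin.sum_univ_three]
    simp only [hKsym 1 0, hKsym 2 0, hKsym 2 1]
    ring
  have h2 : (K *ᵥ av) ⬝ᵥ (K *ᵥ av) = ∑ i, (ev i) ^ 2 * (y i) ^ 2 := by
    rw [h2', hKK]
    simp only [hydef, dotProduct, Matrix.mulVec, Matrix.mul_apply, Matrix.diagonal,
      Fin.sum_univ_three, Matrix.star_apply, star_trivial, Matrix.of_apply]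
    norm_num [Fin.ext_iff]
    ring
  have hbound : lam * (av ⬝ᵥ K *ᵥ av) ≤ (K *ᵥ av) ⬝ᵥ (K *ᵥ av) := by
    rw [h1, h2, Finset.mul_sum]
    exact Finset.sum_le_sum fun i _ => stmt2_term lam (ev i) (y i) hlam_pos (hmin i)
  rw [hqb, hKab] at hbound
  rw [hTr] at hpos ⊢
  rw [hNI, hEsum]
  obtain ⟨e0, h_e0⟩ : ∃ x : ℝ, (1*(Rt 2 2)*(M 1 2) + 1*(Rt 2 1)*(M 1 1) + 1*(Rt 2 0)*(M 0 1) + -1*(Rt 1 2)*(M 2 2) + -1*(Rt 1 1)*(M 1 2) + -1*(Rt 1 0)*(M 0 2)) = x := ⟨_, rfl⟩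
  obtain ⟨k0, h_k0⟩ : ∃ x : ℝ, ((3/2)*(Rt 2 1) + (-1/2)*(Rt 2 1)*(M 0 0) + (1/2)*(Rt 2 0)*(M 0 1) + (-3/2)*(Rt 1 2) + (1/2)*(Rt 1 2)*(M 0 0) + (-1/2)*(Rt 1 0)*(M 0 2) + (-1/2)*(Rt 0 2)*(M 0 1) + (1/2)*(Rt 0 1)*(M 0 2)) = x := ⟨_, rfl⟩
  obtain ⟨w0, h_w0⟩ : ∃ x : ℝ, ((1/4)*(Rt 2 0)*(Rt 2 1)*(M 0 2) + (-1/4)*(Rt 2 0)*(Rt 2 0)*(M 1 2) + (-1/4)*(Rt 1 2)*(Rt 2 0)*(M 0 2) + (1/4)*(Rt 1 0)*(Rt 2 1)*(M 0 1) + (1/4)*(Rt 1 0)*(Rt 2 0)*(M 2 2) + (-1/4)*(Rt 1 0)*(Rt 2 0)*(M 1 1) + (-1/4)*(Rt 1 0)*(Rt 1 2)*(M 0 1) + (1/4)*(Rt 1 0)*(Rt 1 0)*(M 1 2) + (-1/4)*(Rt 0 2)*(Rt 2 1)*(M 0 2) + (1/2)*(Rt 0 2)*(Rt 2 0)*(M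 1 2) + (1/4)*(Rt 0 2)*(Rt 1 2)*(M 0 2) + (-1/4)*(Rt 0 2)*(Rt 1 0)*(M 2 2) + (1/4)*(Rt 0 2)*(Rt 1 0)*(M 1 1) + (-1/4)*(Rt 0 2)*(Rt 0 2)*(M 1 2) + (-1/4)*(Rt 0 1)*(Rt 2 1)*(M 0 1) + (-1/4)*(Rt 0 1)*(Rt 2 0)*(M 2 2) + (1/4)*(Rt 0 1)*(Rt 2 0)*(M 1 1) + (1/4)*(Rt 0 1)*(Rt 1 2)*(M 0 1) + (-1/2)*(Rt 0 1)*(Rt 1 0)*(M 1 2) + (1/4)*(Rt 0 1)*(Rt 0 2)*(M 2 2) + (-1/4)*(Rt 0 1)*(Rt 0 2)*(M 1 1) + (1/4)*(Rt 0 1)*(Rt 0 1)*(M 1 2)) = x := ⟨_, rfl⟩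
  obtain ⟨e1, h_e1⟩ : ∃ x : ℝ, (-1*(Rt 2 2)*(M 0 2) + -1*(Rt 2 1)*(M 0 1) + -1*(Rt 2 0)*(M 0 0) + 1*(Rt 0 2)*(M 2 2) + 1*(Rt 0 1)*(M 1 2) + 1*(Rt 0 0)*(M 0 2)) = x := ⟨_, rfl⟩
  obtain ⟨k1, h_k1⟩ : ∃ x : ℝ, ((-1/2)*(Rt 2 1)*(M 0 1) + (-3/2)*(Rt 2 0) + (1/2)*(Rt 2 0)*(M 1 1) + (1/2)*(Rt 1 2)*(M 0 1) + (-1/2)*(Rt 1 0)*(M 1 2) + (3/2)*(Rt 0 2) + (-1/2)*(Rt 0 2)*(M 1 1) + (1/2)*(Rt 0 1)*(M 1 2)) = x := ⟨_, rfl⟩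
  obtain ⟨w1, h_w1⟩ : ∃ x : ℝ, ((1/4)*(Rt 2 1)*(Rt 2 1)*(M 0 2) + (-1/4)*(Rt 2 0)*(Rt 2 1)*(M 1 2) + (-1/2)*(Rt 1 2)*(Rt 2 1)*(M 0 2) + (1/4)*(Rt 1 2)*(Rt 2 0)*(M 1 2) + (1/4)*(Rt 1 2)*(Rt 1 2)*(M 0 2) + (1/4)*(Rt 1 0)*(Rt 2 1)*(M 2 2) + (-1/4)*(Rt 1 0)*(Rt 2 1)*(M 0 0) + (1/4)*(Rt 1 0)*(Rt 2 0)*(M 0 1) + (-1/4)*(Rt 1 0)*(Rt 1 2)*(M 2 2) + (1/4)*(Rt 1 0)*(Rt 1 2)*(M 0 0) + (-1/4)*(Rt 1 0)*(Rt 1 0)*(M 0 2) + (1/4)*(Rt 0 2)*(Rt 2 1)*(M 1 2) + (-1/4)*(Rt 0 2)*(Rt 1 2)*(M 1 2) + (-1/4)*(Rt 0 2)*(Rt 1 0)*(M 0 1) + (-1/4)*(Rt 0 1)*(Rt 2 1)*(M 2 2) + (1/4)*(Rt 0 1)*(Rt 2 1)*(M 0 0) + (-1/4)*(Rt 0 1)*(Rt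 2 0)*(M 0 1) + (1/4)*(Rt 0 1)*(Rt 1 2)*(M 2 2) + (-1/4)*(Rt 0 1)*(Rt 1 2)*(M 0 0) + (1/2)*(Rt 0 1)*(Rt 1 0)*(M 0 2) + (1/4)*(Rt 0 1)*(Rt 0 2)*(M 0 1) + (-1/4)*(Rt 0 1)*(Rt 0 1)*(M 0 2)) = x := ⟨_, rfl⟩
  obtain ⟨e2, h_e2⟩ : ∃ x : ℝ, (1*(Rt 1 2)*(M 0 2) + 1*(Rt 1 1)*(M 0 1) + 1*(Rt 1 0)*(M 0 0) + -1*(Rt 0 2)*(M 1 2) + -1*(Rt 0 1)*(M 1 1) + -1*(Rt 0 0)*(M 0 1)) = x := ⟨_, rfl⟩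
  obtain ⟨k2, h_k2⟩ : ∃ x : ℝ, ((-1/2)*(Rt 2 1)*(M 0 2) + (1/2)*(Rt 2 0)*(M 1 2) + (1/2)*(Rt 1 2)*(M 0 2) + (3/2)*(Rt 1 0) + (-1/2)*(Rt 1 0)*(M 2 2) + (-1/2)*(Rt 0 2)*(M 1 2) + (-3/2)*(Rt 0 1) + (1/2)*(Rt 0 1)*(M 2 2)) = x := ⟨_, rfl⟩
  obtain ⟨w2, h_w2⟩ : ∃ x : ℝ, ((-1/4)*(Rt 2 1)*(Rt 2 1)*(M 0 1) + (1/4)*(Rt 2 0)*(Rt 2 1)*(M 1 1) + (-1/4)*(Rt 2 0)*(Rt 2 1)*(M 0 0) + (1/4)*(Rt 2 0)*(Rt 2 0)*(M 0 1) + (1/2)*(Rt 1 2)*(Rt 2 1)*(M 0 1) + (-1/4)*(Rt 1 2)*(Rt 2 0)*(M 1 1) + (1/4)*(Rt 1 2)*(Rt 2 0)*(M 0 0) + (-1/4)*(Rt 1 2)*(Rt 1 2)*(M 0 1) + (-1/4)*(Rt 1 0)*(Rt 2 1)*(M 1 2) + (-1/4)*(Rt 1 0)*(Rt 2 0)*(M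 0 2) + (1/4)*(Rt 1 0)*(Rt 1 2)*(M 1 2) + (-1/4)*(Rt 0 2)*(Rt 2 1)*(M 1 1) + (1/4)*(Rt 0 2)*(Rt 2 1)*(M 0 0) + (-1/2)*(Rt 0 2)*(Rt 2 0)*(M 0 1) + (1/4)*(Rt 0 2)*(Rt 1 2)*(M 1 1) + (-1/4)*(Rt 0 2)*(Rt 1 2)*(M 0 0) + (1/4)*(Rt 0 2)*(Rt 1 0)*(M 0 2) + (1/4)*(Rt 0 2)*(Rt 0 2)*(M 0 1) + (1/4)*(Rt 0 1)*(Rt 2 1)*(M 1 2) + (1/4)*(Rt 0 1)*(Rt 2 0)*(M 0 2) + (-1/4)*(Rt 0 1)*(Rt 1 2)*(M 1 2) + (-1/4)*(Rt 0 1)*(Rt 0 2)*(M 0 2)) = x := ⟨_, rfl⟩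
  simp only [h_e0, h_k0, h_w0, h_e1, h_k1, h_w1, h_e2, h_k2, h_w2] at hCB hC0 hC1 hC2 hcross hbound ⊢
  have hW0 : (0:ℝ) ≤ w0^2 + w1^2 + w2^2 := by positivity
  have hSE : (1 + (Rt 0 0 + Rt 1 1 + Rt 2 2))^2 * (e0^2 + e1^2 + e2^2) = (1 + (Rt 0 0 + Rt 1 1 + Rt 2 2))^2 * (k0^2 + k1^2 + k2^2) + 4*(w0^2 + w1^2 + w2^2) := by
    linear_combination ((1 + (Rt 0 0 + Rt 1 1 + Rt 2 2)) * e0 + (1 + (Rt 0 0 + Rt 1 1 + Rt 2 2)) * k0 + 2 * w0) * hC0 + ((1 + (Rt 0 0 + Rt 1 1 + Rt 2 2)) * e1 + (1 + (Rt 0 0 + Rt 1 1 + Rt 2 2)) * k1 + 2 * w1) * hC1 + ((1 + (Rt 0 0 + Rt 1 1 + Rt 2 2)) * e2 + (1 + (Rt 0 0 + Rt 1 1 + Rt 2 2)) * k2 + 2 * w2) * hC2 + (4 * (1 + (Rt 0 0 + Rt 1 1 + Rt 2 2))) * hcross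
  rw [le_div_iff₀ hpos]
  exact stmt2_aux _ lam _ _ _ _ _ hpos hlam_pos hW0 hCB hSE hbound
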